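/- Let M be a von Neumann algebra and let w be a self-adjoint element of M. Let F(z) = z^{−1} sinh(z) = Σ_{n≥0} z^{2n}/(2n+1)!, and let F(ad w) : M → M be the convergent operator series Σ_{n≥0} (ad w)^{2n}/(2n+1)!. Then F(ad w) is a bounded linear operator on M which is invertible in the algebra of bounded operators on M, and F(ad w) restricts to a bijection of the real subspace M_h of self-adjoint elements onto itself. -/

import Mathlib

open scoped ComplexOrder

section Prelude
variable {M : Type*} [CStarAlgebra M]

/-- The absolute value `|z| = (z*z)^{1/2}` of an element of a C*-algebra. -/
noncomputable def oabs (z : M) : M := cfc Real.sqrt (star z * z)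

/-- Real powers `a ^ t` of a (positive invertible) element, via continuous functional calculus. -/
noncomputable def opow (a : M) (t : ℝ) : M := cfc (fun x : ℝ => x ^ t) a

/-- The logarithm of a (positive invertible) element, via continuous functional calculus. -/
noncomputable def olog (a : M) : M := cfc Real.log a

/-- The exponential given by the usual power series. -/
noncomputable def oexp (x : M) : M := NormedSpace.exp x

/-- Positive invertible elements: self-adjoint, invertible, with spectrum in `(0, ∞)`. -/
def IsPosInv (a : M) : Prop :=
  IsSelfAdjoint a ∧ IsUnit a ∧ spectrum ℝ a ⊆ Set.Ioi (0 : ℝ)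

/-- A faithful (normal) tracial state on a von Neumann algebra `M`
(normality, i.e. ultraweak continuity, is not encoded; norm continuity is). -/
structure FiniteTrace (M : Type*) [CStarAlgebra M] where
  toFun : M →ₗ[ℂ] ℂ
  map_one' : toFun 1 = 1
  nonneg' : ∀ x : M, 0 ≤ (toFun (star x * x)).re
  real' : ∀ x : M, (toFun (star x * x)).im = 0
  faithful' : ∀ x : M, toFun (star x * x) = 0 → x = 0
  tracial' : ∀ x y : M, toFun (x * y) = toFun (y * x)
  continuous' : Continuous toFun

/-- The `p`-norm `‖z‖_p = τ(|z|^p)^{1/p}`. -/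
noncomputable def FiniteTrace.pnorm (τ : FiniteTrace M) (p : ℝ) (z : M) : ℝ :=
  (τ.toFun (opow (oabs z) p)).re ^ p⁻¹

/-- Piecewise smooth on `[0,1]`: continuous there, differentiable off a finite set. -/
def PSmooth (γ : ℝ → M) : Prop :=
  ContinuousOn γ (Set.Icc 0 1) ∧
  ∃ s : Finset ℝ, ∀ t ∈ Set.Ioo (0 : ℝ) 1, t ∉ s → DifferentiableAt ℝ γ t

/-- The Finsler `p`-speed `‖γ(t)^{-1/2} γ'(t) γ(t)^{-1/2}‖_p` of a curve in the positive cone. -/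
noncomputable def speed (τ : FiniteTrace M) (p : ℝ) (γ : ℝ → M) (t : ℝ) : ℝ :=
  τ.pnorm p (opow (γ t) (-(1/2 : ℝ)) * deriv γ t * opow (γ t) (-(1/2 : ℝ)))

/-- The Finsler `p`-length of a curve in the positive cone. -/
noncomputable def pLen (τ : FiniteTrace M) (p : ℝ) (γ : ℝ → M) : ℝ :=
  ∫ t in (0:ℝ)..1, speed τ p γ t

/-- The geodesic distance: infimum of `p`-lengths of piecewise smooth curves in the
positive cone joining `a` to `b`. -/
noncomputable def dp (τ : FiniteTrace M) (p : ℝ) (a b : M) : ℝ :=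
  sInf (pLen τ p '' {γ : ℝ → M | PSmooth γ ∧ (∀ t ∈ Set.Icc (0:ℝ) 1, IsPosInv (γ t)) ∧
    γ 0 = a ∧ γ 1 = b})

/-- The geodesic `γ_{a,b}(t) = a^{1/2} (a^{-1/2} b a^{-1/2})^t a^{1/2}`. -/
noncomputable def geo (a b : M) (t : ℝ) : M :=
  opow a (1/2) * opow (opow a (-(1/2 : ℝ)) * b * opow a (-(1/2 : ℝ))) t * opow a (1/2)

end Prelude
section FadAux

open NormedSpace

namespace FadAux

variable {A : Type*} [NormedRing A] [NormedAlgebra ℂ A] [CompleteSpace A]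

/-- `F(x) = ∑ x^{2n}/(2n+1)!`. -/
noncomputable def Fop (x : A) : A := ∑' n : ℕ, (((2 * n + 1).factorial : ℂ))⁻¹ • x ^ (2 * n)

/-- `cosh(x) = ∑ x^{2n}/(2n)!`. -/
noncomputable def Cop (x : A) : A := ∑' n : ℕ, (((2 * n).factorial : ℂ))⁻¹ • x ^ (2 * n)

lemma summable_norm_gen (x : A) (g : ℕ → ℕ) (hg : ∀ n, n ≤ g n) :
    Summable fun n : ℕ => ‖(((g n).factorial : ℂ))⁻¹ • x ^ (2 * n)‖ := by
  set K := max ‖(1 : A)‖ 1 with hK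
  have hK1 : (1:ℝ) ≤ K := le_max_right _ _
  have hK0 : ‖(1:A)‖ ≤ K := le_max_left _ _
  refine Summable.of_nonneg_of_le (fun n => norm_nonneg _) (fun n => ?_)
    (((Real.summable_pow_div_factorial (‖x‖ ^ 2))).mul_left K)
  have hxp : ‖x ^ (2 * n)‖ ≤ K * ‖x‖ ^ (2 * n) := by
    rcases Nat.eq_zero_or_pos n with rfl | hn
    · simpa using hK0
    · calc ‖x ^ (2 * n)‖ ≤ ‖x‖ ^ (2 * n) := norm_pow_le' x (by omega)
        _ ≤ K * ‖x‖ ^ (2 * n) := by nlinarith [pow_nonneg (norm_nonneg x) (2*n)]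
  have hfac : ((g n).factorial : ℝ)⁻¹ ≤ ((n.factorial : ℝ))⁻¹ := by
    gcongr
    exact hg n
  calc ‖(((g n).factorial : ℂ))⁻¹ • x ^ (2 * n)‖
      = ((g n).factorial : ℝ)⁻¹ * ‖x ^ (2 * n)‖ := by
        simp [norm_smul]
    _ ≤ (n.factorial : ℝ)⁻¹ * (K * ‖x‖ ^ (2 * n)) := by
        apply mul_le_mul hfac hxp (norm_nonneg _) (by positivity)
    _ = K * ((‖x‖ ^ 2) ^ n / n.factorial) := by
        rw [← pow_mul]
        field_simp
        try ring

lemma summable_F_norm (x : A) :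
    Summable fun n : ℕ => ‖(((2 * n + 1).factorial : ℂ))⁻¹ • x ^ (2 * n)‖ :=
  summable_norm_gen x _ (fun n => by omega)

lemma summable_C_norm (x : A) :
    Summable fun n : ℕ => ‖(((2 * n).factorial : ℂ))⁻¹ • x ^ (2 * n)‖ :=
  summable_norm_gen x _ (fun n => by omega)

lemma summable_F (x : A) :
    Summable fun n : ℕ => (((2 * n + 1).factorial : ℂ))⁻¹ • x ^ (2 * n) :=
  (summable_F_norm x).of_norm

lemma sum_range_two_mul (f : ℕ → ℂ) (m : ℕ) :
    ∑ k ∈ Finset.range (2 * m), f k = ∑ i ∈ Finset.range m, (f (2 * i) + f (2 * i + 1)) := by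
  induction m with
  | zero => simp
  | succ m ih =>
      rw [show 2 * (m + 1) = 2 * m + 1 + 1 by ring, Finset.sum_range_succ, Finset.sum_range_succ,
        ih, Finset.sum_range_succ]
      ring

lemma odd_choose_sum (n : ℕ) :
    ∑ i ∈ Finset.range (n + 1), ((2 * n + 1).choose (2 * i + 1) : ℂ) = 4 ^ n := by
  have h1 : ∑ k ∈ Finset.range (2 * n + 1 + 1), ((2 * n + 1).choose k : ℂ) = 2 ^ (2 * n + 1) := by
    exact_mod_cast congrArg (fun t : ℕ => (t : ℂ)) (Nat.sum_range_choose (2 * n + 1))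
  have h2 : ∑ k ∈ Finset.range (2 * n + 1 + 1), (-1 : ℂ) ^ k * ((2 * n + 1).choose k : ℂ) = 0 := by
    have h := Int.alternating_sum_range_choose_of_ne (n := 2 * n + 1) (by omega)
    exact_mod_cast congrArg (fun t : ℤ => (t : ℂ)) h
  have h3 : ∑ k ∈ Finset.range (2 * (n + 1)),
      (((2 * n + 1).choose k : ℂ) - (-1 : ℂ) ^ k * ((2 * n + 1).choose k : ℂ))
        = 2 ^ (2 * n + 1) := by
    rw [show 2 * (n + 1) = 2 * n + 1 + 1 by ring, Finset.sum_sub_distrib, h1, h2, sub_zero]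
  rw [sum_range_two_mul] at h3
  have h4 : ∀ i ∈ Finset.range (n + 1),
      ((((2 * n + 1).choose (2 * i) : ℂ) - (-1 : ℂ) ^ (2 * i) * ((2 * n + 1).choose (2 * i) : ℂ))
        + (((2 * n + 1).choose (2 * i + 1) : ℂ)
            - (-1 : ℂ) ^ (2 * i + 1) * ((2 * n + 1).choose (2 * i + 1) : ℂ)))
        = 2 * ((2 * n + 1).choose (2 * i + 1) : ℂ) := by
    intro i _
    have e1 : (-1 : ℂ) ^ (2 * i) = 1 := by rw [pow_mul]; norm_num
    rw [pow_succ, e1]; ring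
  rw [Finset.sum_congr rfl h4, ← Finset.mul_sum] at h3
  have h5 : (2 : ℂ) ^ (2 * n + 1) = 2 * 4 ^ n := by
    rw [pow_succ, pow_mul]; norm_num; ring
  rw [h5] at h3
  exact mul_left_cancel₀ two_ne_zero h3

lemma coeff_identity (n : ℕ) :
    ∑ ij ∈ Finset.HasAntidiagonal.antidiagonal n,
      ((((2 * ij.1 + 1).factorial : ℂ))⁻¹ * (((2 * ij.2).factorial : ℂ))⁻¹)
      = (4 : ℂ) ^ n * (((2 * n + 1).factorial : ℂ))⁻¹ := by
  rw [Finset.Nat.sum_antidiagonal_eq_sum_range_succ_mk]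
  have key : ∀ i ∈ Finset.range (n + 1),
      (((2 * i + 1).factorial : ℂ))⁻¹ * (((2 * (n - i)).factorial : ℂ))⁻¹
        = ((2 * n + 1).choose (2 * i + 1) : ℂ) * (((2 * n + 1).factorial : ℂ))⁻¹ := by
    intro i hi
    have hin : i ≤ n := Nat.lt_succ_iff.mp (Finset.mem_range.mp hi)
    have hc := Nat.choose_mul_factorial_mul_factorial (show 2 * i + 1 ≤ 2 * n + 1 by omega)
    rw [show 2 * n + 1 - (2 * i + 1) = 2 * (n - i) by omega] at hc
    have hcC : ((2 * n + 1).choose (2 * i + 1) : ℂ) * ((2 * i + 1).factorial : ℂ)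
        * ((2 * (n - i)).factorial : ℂ) = ((2 * n + 1).factorial : ℂ) := by
      exact_mod_cast congrArg (fun t : ℕ => (t : ℂ)) hc
    have h1 : ((2 * i + 1).factorial : ℂ) ≠ 0 := Nat.cast_ne_zero.mpr (Nat.factorial_ne_zero _)
    have h2 : ((2 * (n - i)).factorial : ℂ) ≠ 0 := Nat.cast_ne_zero.mpr (Nat.factorial_ne_zero _)
    have h3 : ((2 * n + 1).factorial : ℂ) ≠ 0 := Nat.cast_ne_zero.mpr (Nat.factorial_ne_zero _)
    field_simp
    linear_combination -hcC
  rw [Finset.sum_congr rfl key, ← Finset.sum_mul, odd_choose_sum]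

lemma Fop_two_smul (x : A) : Fop ((2 : ℂ) • x) = Fop x * Cop x := by
  rw [Fop, Cop, Fop, tsum_mul_tsum_eq_tsum_sum_antidiagonal_of_summable_norm
    (summable_F_norm x) (summable_C_norm x)]
  refine tsum_congr fun n => ?_
  have hterm : ∀ ij ∈ Finset.HasAntidiagonal.antidiagonal n,
      ((((2 * ij.1 + 1).factorial : ℂ))⁻¹ • x ^ (2 * ij.1))
        * ((((2 * ij.2).factorial : ℂ))⁻¹ • x ^ (2 * ij.2))
        = ((((2 * ij.1 + 1).factorial : ℂ))⁻¹ * (((2 * ij.2).factorial : ℂ))⁻¹) • x ^ (2 * n) := by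
    intro ij hij
    have hij' : ij.1 + ij.2 = n := Finset.HasAntidiagonal.mem_antidiagonal.mp hij
    rw [smul_mul_assoc, mul_smul_comm, smul_smul, ← pow_add]
    congr 2
    omega
  rw [Finset.sum_congr rfl hterm, ← Finset.sum_smul, coeff_identity, smul_pow, smul_smul]
  congr 1
  rw [show (2 : ℂ) ^ (2 * n) = 4 ^ n by rw [pow_mul]; norm_num]
  ring

lemma Cop_eq_exp (x : A) : Cop x = (2 : ℂ)⁻¹ • (exp x + exp (-x)) := by
  have hf : HasSum (fun n : ℕ => (n.factorial⁻¹ : ℂ) • x ^ n) (exp x) := by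
    rw [exp_eq_tsum ℂ]
    exact (expSeries_summable' (𝕂 := ℂ) x).hasSum
  have hg : HasSum (fun n : ℕ => (n.factorial⁻¹ : ℂ) • (-x) ^ n) (exp (-x)) := by
    rw [exp_eq_tsum ℂ]
    exact (expSeries_summable' (𝕂 := ℂ) (-x)).hasSum
  have hfg := hf.add hg
  have hinj : Function.Injective (fun k : ℕ => 2 * k) := fun a b h =>
    Nat.eq_of_mul_eq_mul_left two_pos h
  have hv : ∀ n ∉ Set.range (fun k : ℕ => 2 * k),
      ((n.factorial⁻¹ : ℂ) • x ^ n + (n.factorial⁻¹ : ℂ) • (-x) ^ n) = 0 := by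
    intro n hn
    have hodd : Odd n := by
      rcases Nat.even_or_odd n with he | ho
      · obtain ⟨k, hk⟩ := he
        exact absurd ⟨k, show 2 * k = n by omega⟩ hn
      · exact ho
    rw [hodd.neg_pow, smul_neg, add_neg_cancel]
  have h2 : HasSum (fun k : ℕ =>
      (((2 * k).factorial⁻¹ : ℂ) • x ^ (2 * k) + ((2 * k).factorial⁻¹ : ℂ) • (-x) ^ (2 * k)))
      (exp x + exp (-x)) := (hinj.hasSum_iff hv).mpr hfg
  have h3 : (fun k : ℕ =>
      (((2 * k).factorial⁻¹ : ℂ) • x ^ (2 * k) + ((2 * k).factorial⁻¹ : ℂ) • (-x) ^ (2 * k)))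
      = fun k : ℕ => (2 : ℂ) • (((2 * k).factorial : ℂ))⁻¹ • x ^ (2 * k) := by
    funext k
    rw [Even.neg_pow ⟨k, by ring⟩, two_smul]
  rw [h3] at h2
  have h4 := h2.const_smul ((2 : ℂ)⁻¹)
  simp only [smul_smul, ← mul_assoc, inv_mul_cancel₀ (two_ne_zero (α := ℂ)), one_mul] at h4
  rw [Cop]
  exact h4.tsum_eq

lemma fact_bound : ∀ n : ℕ, 6 * 4 ^ n ≤ (2 * n + 3).factorial := by
  intro n
  induction n with
  | zero => simp [Nat.factorial]
  | succ n ih =>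
      have h : 2 * (n + 1) + 3 = (2 * n + 4) + 1 := by ring
      rw [h, Nat.factorial_succ, show 2 * n + 4 = (2 * n + 3) + 1 by ring, Nat.factorial_succ]
      calc 6 * 4 ^ (n + 1) = 4 * (6 * 4 ^ n) := by ring
        _ ≤ 4 * (2 * n + 3).factorial := Nat.mul_le_mul_left _ ih
        _ ≤ ((2 * n + 3) + 1) * (2 * n + 3).factorial :=
            Nat.mul_le_mul_right _ (by omega)
        _ ≤ ((2 * n + 3) + 1 + 1) * (((2 * n + 3) + 1) * (2 * n + 3).factorial) :=
            Nat.le_mul_of_pos_left _ (by omega)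
        _ = ((2 * n + 3) + 1 + 1) * (((2 * n + 3) + 1) * (2 * n + 3).factorial) := rfl

lemma Fop_unit_of_small (x : A) (hx : ‖x‖ ≤ 1) : IsUnit (Fop x) := by
  have hs := summable_F x
  have h0 : Fop x = 1 + ∑' n : ℕ, (((2 * (n + 1) + 1).factorial : ℂ))⁻¹ • x ^ (2 * (n + 1)) := by
    rw [Fop, hs.tsum_eq_zero_add]
    norm_num [Nat.factorial]
  have hsn : Summable fun n : ℕ =>
      ‖(((2 * (n + 1) + 1).factorial : ℂ))⁻¹ • x ^ (2 * (n + 1))‖ := by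
    have := (summable_F_norm x).comp_injective (add_left_injective 1)
    simpa [Function.comp_def] using this
  have hterm : ∀ n : ℕ, ‖(((2 * (n + 1) + 1).factorial : ℂ))⁻¹ • x ^ (2 * (n + 1))‖
      ≤ (1 / 6) * (1 / 4 : ℝ) ^ n := by
    intro n
    rw [norm_smul, norm_inv]
    have hxn : ‖x ^ (2 * (n + 1))‖ ≤ 1 := by
      calc ‖x ^ (2 * (n + 1))‖ ≤ ‖x‖ ^ (2 * (n + 1)) := norm_pow_le' x (by omega)
        _ ≤ 1 := pow_le_one₀ (norm_nonneg x) hx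
    have hfn : ‖(((2 * (n + 1) + 1).factorial : ℂ))‖ = (((2 * (n + 1) + 1).factorial : ℝ)) := by
      simp
    rw [hfn]
    have hb : (6 * 4 ^ n : ℝ) ≤ ((2 * (n + 1) + 1).factorial : ℝ) := by
      have := fact_bound n
      have h' : 2 * (n + 1) + 1 = 2 * n + 3 := by ring
      rw [h']
      exact_mod_cast this
    have h6 : (0:ℝ) < 6 * 4 ^ n := by positivity
    calc ((2 * (n + 1) + 1).factorial : ℝ)⁻¹ * ‖x ^ (2 * (n + 1))‖
        ≤ ((2 * (n + 1) + 1).factorial : ℝ)⁻¹ * 1 := by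
          apply mul_le_mul_of_nonneg_left hxn (by positivity)
      _ = ((2 * (n + 1) + 1).factorial : ℝ)⁻¹ := mul_one _
      _ ≤ (6 * 4 ^ n : ℝ)⁻¹ := by gcongr
      _ = (1 / 6) * (1 / 4 : ℝ) ^ n := by
          rw [mul_inv, ← inv_pow]
          norm_num
  have hlt : ‖∑' n : ℕ, (((2 * (n + 1) + 1).factorial : ℂ))⁻¹ • x ^ (2 * (n + 1))‖ < 1 := by
    have hgeo : Summable fun n : ℕ => (1 / 6) * (1 / 4 : ℝ) ^ n :=
      (summable_geometric_of_lt_one (by norm_num) (by norm_num)).mul_left _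
    calc ‖∑' n : ℕ, (((2 * (n + 1) + 1).factorial : ℂ))⁻¹ • x ^ (2 * (n + 1))‖
        ≤ ∑' n : ℕ, ‖(((2 * (n + 1) + 1).factorial : ℂ))⁻¹ • x ^ (2 * (n + 1))‖ :=
          norm_tsum_le_tsum_norm hsn
      _ ≤ ∑' n : ℕ, (1 / 6) * (1 / 4 : ℝ) ^ n := Summable.tsum_le_tsum hterm hsn hgeo
      _ = (1 / 6) * (1 - 1 / 4)⁻¹ := by
          rw [tsum_mul_left, tsum_geometric_of_lt_one (by norm_num) (by norm_num)]
      _ < 1 := by norm_num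
  rw [h0]
  have h := isUnit_one_sub_of_norm_lt_one
    (x := -(∑' n : ℕ, (((2 * (n + 1) + 1).factorial : ℂ))⁻¹ • x ^ (2 * (n + 1))))
    (by rwa [norm_neg])
  simpa [sub_neg_eq_add] using h

lemma isUnit_coe_smul_one_sub {c : ℝ} (hc : 0 < c) {y : A} (hy : ‖y‖ < c) :
    IsUnit (((c : ℂ)) • (1 : A) - y) := by
  have hc0 : (c : ℂ) ≠ 0 := by exact_mod_cast hc.ne'
  have hfact : ((c : ℂ)) • (1 : A) - y = ((c : ℂ) • (1 : A)) * (1 - (c : ℂ)⁻¹ • y) := by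
    rw [mul_sub, mul_one, smul_mul_assoc, one_mul, smul_smul, mul_inv_cancel₀ hc0, one_smul]
  rw [hfact]
  refine IsUnit.mul ?_ (isUnit_one_sub_of_norm_lt_one ?_)
  · rw [← Algebra.algebraMap_eq_smul_one]
    exact (isUnit_iff_ne_zero.mpr hc0).map (algebraMap ℂ A)
  · rw [norm_smul, norm_inv]
    have hnc : ‖(c : ℂ)‖ = c := by
      rw [Complex.norm_real, Real.norm_eq_abs, abs_of_pos hc]
    rw [hnc]
    have := (div_lt_one hc).mpr hy
    rwa [div_eq_inv_mul] at this

end FadAux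

end FadAux

namespace FadAux

open NormedSpace

section CStarPart

variable {M : Type*} [CStarAlgebra M]

noncomputable def Lop (v : M) : M →L[ℂ] M := ContinuousLinearMap.mul ℂ M v

noncomputable def Rop (v : M) : M →L[ℂ] M := (ContinuousLinearMap.mul ℂ M).flip v

noncomputable def adop (v : M) : M →L[ℂ] M := Lop v - Rop v

@[simp] lemma Lop_apply (v y : M) : Lop v y = v * y := rfl

@[simp] lemma Rop_apply (v y : M) : Rop v y = y * v := rfl

lemma adop_apply (v y : M) : adop v y = v * y - y * v := rfl

lemma Lop_mul (a b : M) : Lop a * Lop b = Lop (a * b) := by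
  ext y; simp [ContinuousLinearMap.mul_apply, mul_assoc]

lemma Rop_mul (a b : M) : Rop a * Rop b = Rop (b * a) := by
  ext y; simp [ContinuousLinearMap.mul_apply, mul_assoc]

lemma Lop_Rop_comm (a b : M) : Lop a * Rop b = Rop b * Lop a := by
  ext y; simp [ContinuousLinearMap.mul_apply, mul_assoc]

@[simp] lemma Lop_one : (Lop (1 : M)) = 1 := by
  ext y; simp

@[simp] lemma Rop_one : (Rop (1 : M)) = 1 := by
  ext y; simp

lemma Lop_pow (v : M) (n : ℕ) : (Lop v) ^ n = Lop (v ^ n) := by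
  induction n with
  | zero => simp
  | succ n ih => rw [pow_succ, ih, Lop_mul, ← pow_succ]

lemma Rop_pow (v : M) (n : ℕ) : (Rop v) ^ n = Rop (v ^ n) := by
  induction n with
  | zero => simp
  | succ n ih => rw [pow_succ, ih, Rop_mul, ← pow_succ']

lemma norm_Lop_le (b : M) : ‖Lop b‖ ≤ ‖b‖ :=
  ContinuousLinearMap.opNorm_mul_apply_le ℂ M b

lemma norm_Rop_le (b : M) : ‖Rop b‖ ≤ ‖b‖ := by
  apply ContinuousLinearMap.opNorm_le_bound _ (norm_nonneg b)
  intro y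
  rw [Rop_apply, mul_comm ‖b‖ ‖y‖]
  exact norm_mul_le y b

lemma exp_Lop (v : M) : exp (Lop v) = Lop (exp v) := by
  simp only [exp_eq_tsum ℂ]
  have h : Lop (∑' n : ℕ, (n.factorial⁻¹ : ℂ) • v ^ n)
      = ∑' n : ℕ, (n.factorial⁻¹ : ℂ) • Lop (v ^ n) := by
    rw [show (Lop (∑' n : ℕ, (n.factorial⁻¹ : ℂ) • v ^ n) : M →L[ℂ] M)
        = ContinuousLinearMap.mul ℂ M (∑' n : ℕ, (n.factorial⁻¹ : ℂ) • v ^ n) from rfl,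
      ContinuousLinearMap.map_tsum _ (expSeries_summable' (𝕂 := ℂ) v)]
    simp [Lop]
  rw [h]
  exact tsum_congr fun n => by rw [Lop_pow]

lemma exp_Rop (v : M) : exp (Rop v) = Rop (exp v) := by
  simp only [exp_eq_tsum ℂ]
  have h : Rop (∑' n : ℕ, (n.factorial⁻¹ : ℂ) • v ^ n)
      = ∑' n : ℕ, (n.factorial⁻¹ : ℂ) • Rop (v ^ n) := by
    rw [show (Rop (∑' n : ℕ, (n.factorial⁻¹ : ℂ) • v ^ n) : M →L[ℂ] M)
        = (ContinuousLinearMap.mul ℂ M).flip (∑' n : ℕ, (n.factorial⁻¹ : ℂ) • v ^ n) from rfl,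
      ContinuousLinearMap.map_tsum _ (expSeries_summable' (𝕂 := ℂ) v)]
    simp [Rop]
  rw [h]
  exact tsum_congr fun n => by rw [Rop_pow]

lemma Rop_neg (v : M) : Rop (-v) = -Rop v := by
  ext y; simp

lemma adop_neg (v : M) : adop (-v) = -adop v := by
  ext y; simp [adop_apply]; abel

lemma adop_smul (z : ℂ) (v : M) : adop (z • v) = z • adop v := by
  ext y; simp [adop_apply, smul_sub, mul_smul_comm, smul_mul_assoc]

lemma exp_add_comm_C {B : Type*} [NormedRing B] [NormedAlgebra ℂ B] [CompleteSpace B]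
    {x y : B} (h : Commute x y) : exp (x + y) = exp x * exp y :=
  exp_add_of_commute_of_mem_ball (𝕂 := ℂ) h
    ((expSeries_radius_eq_top ℂ B).symm ▸ edist_lt_top _ _)
    ((expSeries_radius_eq_top ℂ B).symm ▸ edist_lt_top _ _)

lemma exp_adop (v : M) : exp (adop v) = Lop (exp v) * Rop (exp (-v)) := by
  have hc0 : Commute (Lop v) (Rop v) := Lop_Rop_comm v v
  have hc : Commute (Lop v) (-(Rop v)) := hc0.neg_right
  rw [adop, sub_eq_add_neg, exp_add_comm_C hc, exp_Lop]
  congr 1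
  rw [← Rop_neg, exp_Rop]

lemma exp_mul_exp_neg (v : M) : exp v * exp (-v) = 1 := by
  rw [← exp_add_comm_C (Commute.refl v).neg_right]
  simp

lemma exp_neg_mul_exp (v : M) : exp (-v) * exp v = 1 := by
  rw [← exp_add_comm_C (Commute.refl v).neg_left]
  simp

lemma LplusR_isUnit (s : M) (hs : IsSelfAdjoint s) :
    IsUnit (Lop (exp s) + Rop (exp s)) := by
  rcases subsingleton_or_nontrivial M with hM | hM
  · exact (Subsingleton.elim (Lop (exp s) + Rop (exp s)) 1) ▸ isUnit_one
  set a : M := exp s with ha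
  set m : ℝ := ‖s‖ with hm
  set c : ℝ := Real.cosh m with hc
  have hcpos : 0 < c := by rw [hc]; exact Real.cosh_pos m
  have hacfc : a = cfc Real.exp s := by
    rw [ha, CFC.real_exp_eq_normedSpace_exp (a := s) hs]
  set b : M := algebraMap ℝ M c - a with hb
  have hbnorm : ‖b‖ < c := by
    have hbeq : cfc (fun t : ℝ => c - Real.exp t) s = b := by
      rw [cfc_sub (fun _ : ℝ => c) Real.exp s, cfc_const c s hs, ← hacfc, hb]
    rw [← hbeq]
    apply norm_cfc_lt hcpos
    intro x hx
    have hxm : |x| ≤ m := by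
      simpa [Real.norm_eq_abs] using spectrum.norm_le_norm_of_mem hx
    have hex : Real.exp x ≤ Real.exp m := Real.exp_le_exp.mpr (le_trans (le_abs_self x) hxm)
    have h2c : Real.exp x < 2 * c := by
      rw [hc, Real.cosh_eq]
      have : 0 < Real.exp (-m) := Real.exp_pos _
      calc Real.exp x ≤ Real.exp m := hex
        _ < Real.exp m + Real.exp (-m) := by linarith
        _ = 2 * ((Real.exp m + Real.exp (-m)) / 2) := by ring
    rw [Real.norm_eq_abs, abs_lt]
    constructor
    · linarith
    · have := Real.exp_pos x
      linarith
  have key : Lop a + Rop a = (((2 * c : ℝ) : ℂ)) • (1 : M →L[ℂ] M) - (Lop b + Rop b) := by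
    have haeq : a = algebraMap ℝ M c - b := by rw [hb, sub_sub_cancel]
    have halg : algebraMap ℝ M c = ((c : ℂ)) • (1 : M) := by
      rw [IsScalarTower.algebraMap_apply ℝ ℂ M, Algebra.algebraMap_eq_smul_one]
      rfl
    have hL : Lop a = ((c : ℂ)) • (1 : M →L[ℂ] M) - Lop b := by
      ext y
      simp only [haeq, halg, ContinuousLinearMap.sub_apply, ContinuousLinearMap.smul_apply,
        ContinuousLinearMap.one_apply, Lop_apply]
      rw [sub_mul, smul_mul_assoc, one_mul]
    have hR : Rop a = ((c : ℂ)) • (1 : M →L[ℂ] M) - Rop b := by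
      ext y
      simp only [haeq, halg, ContinuousLinearMap.sub_apply, ContinuousLinearMap.smul_apply,
        ContinuousLinearMap.one_apply, Rop_apply]
      rw [mul_sub, mul_smul_comm, mul_one]
    rw [hL, hR]
    have h2c : (((2 * c : ℝ) : ℂ)) = (c : ℂ) + (c : ℂ) := by push_cast; ring
    rw [h2c]
    have h2s := add_smul (c : ℂ) (c : ℂ) (1 : M →L[ℂ] M)
    rw [h2s]
    abel
  rw [key]
  apply isUnit_coe_smul_one_sub (by positivity)
  calc ‖Lop b + Rop b‖ ≤ ‖Lop b‖ + ‖Rop b‖ := norm_add_le _ _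
    _ ≤ ‖b‖ + ‖b‖ := add_le_add (norm_Lop_le b) (norm_Rop_le b)
    _ < 2 * c := by linarith

lemma Cop_adop_isUnit (v : M) (hv : IsSelfAdjoint v) : IsUnit (Cop (adop v)) := by
  set U : M := exp v with hU
  set U' : M := exp (-v) with hU'
  have hUU' : U * U' = 1 := exp_mul_exp_neg v
  have hU'U : U' * U = 1 := exp_neg_mul_exp v
  have hfact : Cop (adop v)
      = (2 : ℂ)⁻¹ • ((Lop U' * Rop U') * (Lop (U * U) + Rop (U * U))) := by
    rw [Cop_eq_exp, exp_adop]
    have hneg : exp (-adop v) = Lop U' * Rop U := by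
      rw [← adop_neg, exp_adop, neg_neg]
    rw [hneg]
    congr 1
    have h1 : ∀ t : M, U' * (U * t) = t := fun t => by rw [← mul_assoc, hU'U, one_mul]
    ext y
    simp [ContinuousLinearMap.mul_apply, mul_add, add_mul, mul_assoc, h1, hUU']
    rfl
  have hUUexp : U * U = exp (v + v) := by
    rw [exp_add_comm_C (Commute.refl v)]
  have hvv : IsSelfAdjoint (v + v) := hv.add hv
  have hLRunit : IsUnit (Lop (U * U) + Rop (U * U)) := by
    rw [hUUexp]
    exact LplusR_isUnit (v + v) hvv
  have hLU' : IsUnit (Lop U') := by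
    refine ⟨⟨Lop U', Lop U, ?_, ?_⟩, rfl⟩
    · rw [Lop_mul, hU'U, Lop_one]
    · rw [Lop_mul, hUU', Lop_one]
  have hRU' : IsUnit (Rop U') := by
    refine ⟨⟨Rop U', Rop U, ?_, ?_⟩, rfl⟩
    · rw [Rop_mul, hUU', Rop_one]
    · rw [Rop_mul, hU'U, Rop_one]
  have hsmul_eq : (2 : ℂ)⁻¹ • (Lop U' * Rop U' * (Lop (U * U) + Rop (U * U)))
      = ((2 : ℂ)⁻¹ • (1 : M →L[ℂ] M)) * (Lop U' * Rop U' * (Lop (U * U) + Rop (U * U))) := by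
    ext y; simp
  have hhalf : IsUnit ((2 : ℂ)⁻¹ • (1 : M →L[ℂ] M)) := by
    refine ⟨⟨(2 : ℂ)⁻¹ • 1, (2 : ℂ) • 1, ?_, ?_⟩, rfl⟩
    · ext y
      show (2 : ℂ)⁻¹ • ((2 : ℂ) • y) = y
      rw [smul_smul]
      norm_num
    · ext y
      show (2 : ℂ) • ((2 : ℂ)⁻¹ • y) = y
      rw [smul_smul]
      norm_num
  rw [hfact, hsmul_eq]
  exact hhalf.mul ((hLU'.mul hRU').mul hLRunit)

lemma norm_adop_le (v : M) : ‖adop v‖ ≤ 2 * ‖v‖ := by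
  calc ‖adop v‖ ≤ ‖Lop v‖ + ‖Rop v‖ := norm_sub_le _ _
    _ ≤ ‖v‖ + ‖v‖ := add_le_add (norm_Lop_le v) (norm_Rop_le v)
    _ = 2 * ‖v‖ := by ring

lemma selfAdjoint_real_smul {w : M} (hw : IsSelfAdjoint w) (r : ℝ) :
    IsSelfAdjoint (((r : ℂ)) • w) := by
  rw [IsSelfAdjoint, star_smul, Complex.star_def, Complex.conj_ofReal, hw.star_eq]

lemma main_isUnit (w : M) (hw : IsSelfAdjoint w) : IsUnit (Fop (adop w)) := by
  obtain ⟨N, hN⟩ : ∃ N : ℕ, 2 * ‖w‖ ≤ (2 : ℝ) ^ N := by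
    obtain ⟨n, hn⟩ := pow_unbounded_of_one_lt (2 * ‖w‖) (one_lt_two (α := ℝ))
    exact ⟨n, hn.le⟩
  have key : ∀ k : ℕ,
      IsUnit (Fop (adop (((((2 : ℝ) ^ k / 2 ^ N : ℝ)) : ℂ) • w))) := by
    intro k
    induction k with
    | zero =>
        apply Fop_unit_of_small
        have h1 : ‖adop ((((1 / 2 ^ N : ℝ)) : ℂ) • w)‖
            ≤ 2 * ‖(((1 / 2 ^ N : ℝ)) : ℂ) • w‖ := norm_adop_le _
        have h2 : ‖(((1 / 2 ^ N : ℝ)) : ℂ) • w‖ = (1 / 2 ^ N : ℝ) * ‖w‖ := by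
          rw [norm_smul, Complex.norm_real, Real.norm_eq_abs, abs_of_pos (by positivity)]
        have h3 : (2:ℝ) * ((1 / 2 ^ N : ℝ) * ‖w‖) ≤ 1 := by
          rw [div_mul_eq_mul_div, one_mul, ← mul_div_assoc, div_le_one (by positivity)]
          linarith
        calc ‖adop (((((2 : ℝ) ^ 0 / 2 ^ N : ℝ)) : ℂ) • w)‖
            = ‖adop ((((1 / 2 ^ N : ℝ)) : ℂ) • w)‖ := by norm_num
          _ ≤ 2 * ‖(((1 / 2 ^ N : ℝ)) : ℂ) • w‖ := h1
          _ = 2 * ((1 / 2 ^ N : ℝ) * ‖w‖) := by rw [h2]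
          _ ≤ 1 := h3
    | succ k ih =>
        have hs : ((((2 : ℝ) ^ (k + 1) / 2 ^ N : ℝ)) : ℂ) • w
            = (2 : ℂ) • (((((2 : ℝ) ^ k / 2 ^ N : ℝ)) : ℂ) • w) := by
          rw [smul_smul]
          congr 1
          push_cast
          ring
        rw [hs, adop_smul, Fop_two_smul]
        exact ih.mul (Cop_adop_isUnit _ (selfAdjoint_real_smul hw _))
  have hfin := key N
  have hone : ((((2 : ℝ) ^ N / 2 ^ N : ℝ)) : ℂ) = 1 := by
    rw [div_self (by positivity : ((2:ℝ) ^ N) ≠ 0)]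
    norm_num
  rwa [hone, one_smul] at hfin

lemma adop_pow_iterate (w : M) (k : ℕ) (y : M) :
    ((adop w) ^ k) y = (fun z : M => w * z - z * w)^[k] y := by
  induction k generalizing y with
  | zero => simp
  | succ k ih =>
      rw [Function.iterate_succ_apply, pow_succ, ContinuousLinearMap.mul_apply, ih (adop w y)]
      rfl

lemma Fop_adop_apply (w : M) (y : M) :
    Fop (adop w) y = ∑' n : ℕ, (((2 * n + 1).factorial : ℂ))⁻¹ • (((adop w) ^ (2 * n)) y) := by
  rw [Fop]
  rw [show (∑' n : ℕ, (((2 * n + 1).factorial : ℂ))⁻¹ • (adop w) ^ (2 * n)) y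
      = ContinuousLinearMap.apply ℂ M y
        (∑' n : ℕ, (((2 * n + 1).factorial : ℂ))⁻¹ • (adop w) ^ (2 * n)) from rfl,
    ContinuousLinearMap.map_tsum _ (summable_F (adop w))]
  refine tsum_congr fun n => ?_
  simp

lemma adop_star (w : M) (hw : IsSelfAdjoint w) (z : M) :
    star (adop w z) = -(adop w (star z)) := by
  simp only [adop_apply, star_sub, star_mul, hw.star_eq, neg_sub]

lemma adop_pow_star (w : M) (hw : IsSelfAdjoint w) (k : ℕ) (z : M) :
    star (((adop w) ^ k) z) = ((-1 : ℂ) ^ k) • (((adop w) ^ k) (star z)) := by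
  induction k generalizing z with
  | zero => simp
  | succ k ih =>
      have hL : ((adop w) ^ (k + 1)) z = ((adop w) ^ k) (adop w z) := by
        rw [pow_succ, ContinuousLinearMap.mul_apply]
      have hR : ((adop w) ^ (k + 1)) (star z) = ((adop w) ^ k) (adop w (star z)) := by
        rw [pow_succ, ContinuousLinearMap.mul_apply]
      rw [hL, hR, ih (adop w z), adop_star w hw, map_neg, smul_neg, pow_succ, mul_smul,
        neg_one_smul, smul_neg]

lemma Fop_adop_star (w : M) (hw : IsSelfAdjoint w) (y : M) :
    Fop (adop w) (star y) = star (Fop (adop w) y) := by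
  rw [Fop_adop_apply, Fop_adop_apply, tsum_star]
  refine tsum_congr fun n => ?_
  rw [star_smul, adop_pow_star w hw]
  have h1 : ((-1 : ℂ) ^ (2 * n)) = 1 := by rw [pow_mul]; norm_num
  have h2 : star ((((2 * n + 1).factorial : ℂ))⁻¹) = (((2 * n + 1).factorial : ℂ))⁻¹ := by
    simp [Complex.star_def, map_inv₀]
  rw [h1, h2, one_smul]

end CStarPart

end FadAux

/-- for self-adjoint `w`, the operator `F(ad w) = Σ (ad w)^{2n}/(2n+1)!` is a
bounded invertible operator on `M` restricting to a bijection of the self-adjoint part. -/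
theorem F_ad_bounded_invertible_bijOn_selfAdjoint
    {M : Type*} [CStarAlgebra M] (w : M) (hw : IsSelfAdjoint w) :
    ∃ T : M →L[ℂ] M,
      (∀ y : M, T y = ∑' n : ℕ, (((2 * n + 1).factorial : ℂ))⁻¹ •
          (fun z : M => w * z - z * w)^[2 * n] y) ∧
      (∃ S : M →L[ℂ] M, T.comp S = ContinuousLinearMap.id ℂ M ∧
          S.comp T = ContinuousLinearMap.id ℂ M) ∧
      Set.BijOn (fun y : M => T y) {a : M | IsSelfAdjoint a} {a : M | IsSelfAdjoint a} := by
  classical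
  obtain ⟨u, hu⟩ := FadAux.main_isUnit w hw
  set T : M →L[ℂ] M := FadAux.Fop (FadAux.adop w) with hT
  set S : M →L[ℂ] M := ↑u⁻¹ with hS
  have hTu : (↑u : M →L[ℂ] M) = T := hu
  have hTS : ∀ z : M, T (S z) = z := by
    intro z
    have h := u.mul_inv
    have h2 := congrArg (fun f : M →L[ℂ] M => f z) h
    simpa [hTu, ContinuousLinearMap.mul_apply, hS] using h2
  have hST : ∀ z : M, S (T z) = z := by
    intro z
    have h := u.inv_mul
    have h2 := congrArg (fun f : M →L[ℂ] M => f z) h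
    simpa [hTu, ContinuousLinearMap.mul_apply, hS] using h2
  have hstar : ∀ y : M, T (star y) = star (T y) := fun y => FadAux.Fop_adop_star w hw y
  have hSstar : ∀ y : M, S (star y) = star (S y) := by
    intro y
    have h1 : T (star (S y)) = star y := by rw [hstar, hTS]
    calc S (star y) = S (T (star (S y))) := by rw [h1]
      _ = star (S y) := hST _
  refine ⟨T, ?_, ⟨S, ?_, ?_⟩, ?_, ?_, ?_⟩
  · intro y
    rw [hT, FadAux.Fop_adop_apply w y]
    exact tsum_congr fun n => by rw [FadAux.adop_pow_iterate]
  · ext z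
    simp [ContinuousLinearMap.comp_apply, hTS z]
  · ext z
    simp [ContinuousLinearMap.comp_apply, hST z]
  · intro a ha
    have haa : IsSelfAdjoint a := ha
    show IsSelfAdjoint (T a)
    rw [IsSelfAdjoint, ← hstar, haa.star_eq]
  · intro a _ b _ hab
    have h2 := congrArg S hab
    simpa [hST] using h2
  · intro a ha
    have haa : IsSelfAdjoint a := ha
    refine ⟨S a, ?_, hTS a⟩
    show IsSelfAdjoint (S a)
    rw [IsSelfAdjoint, ← hSstar, haa.star_eq]
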